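/- Let Λ be a full-rank lattice in ℝ^d, let H' be an affine hyperplane, let R be a bounded subset of H', and let C > 0. Then there is a constant A such that for every positive integer k, the number of points of (1/k)Λ within distance C/k of R is at most A·k^{d−1}. -/

import Mathlib

open Finset

set_option maxHeartbeats 1000000

/-- For a full-rank lattice `Λ` in `ℝ^d`, a bounded region `R` of an affine hyperplane,
and `C > 0`, the number of points of `(1/k)Λ` within distance `C/k` of `R` is `O(k^(d-1))`. -/
theorem lattice_points_near_bounded_region (d : ℕ)
    (b : Module.Basis (Fin d) ℝ (EuclideanSpace ℝ (Fin d)))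
    (φ : EuclideanSpace ℝ (Fin d) →ₗ[ℝ] ℝ) (hφ : φ ≠ 0) (c : ℝ)
    (R : Set (EuclideanSpace ℝ (Fin d))) (hR : R ⊆ {x | φ x = c})
    (hRbdd : Bornology.IsBounded R) (C : ℝ) (hC : 0 < C) :
    ∃ A : ℝ, ∀ k : ℕ, 0 < k →
      let S : Set (EuclideanSpace ℝ (Fin d)) :=
        {x | (∃ y ∈ AddSubgroup.closure (Set.range b), x = (k : ℝ)⁻¹ • y) ∧
             ∃ r ∈ R, dist x r ≤ C / k}
      S.Finite ∧ (S.ncard : ℝ) ≤ A * (k : ℝ) ^ (d - 1) := by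
  classical
  obtain ⟨M₀, hM₀⟩ := hRbdd.subset_closedBall 0
  set M : ℝ := max M₀ 0 with hMdef
  have hM : R ⊆ Metric.closedBall 0 M :=
    hM₀.trans (Metric.closedBall_subset_closedBall (le_max_left _ _))
  have hM0 : 0 ≤ M := le_max_right _ _
  -- coordinate functionals are bounded
  set eF : EuclideanSpace ℝ (Fin d) →L[ℝ] (Fin d → ℝ) := LinearMap.toContinuousLinearMap b.equivFun.toLinearMap with heF
  set K : ℝ := ‖eF‖ with hKdef
  have hK0 : 0 ≤ K := norm_nonneg _
  have hK : ∀ x : EuclideanSpace ℝ (Fin d), ∀ i, |b.repr x i| ≤ K * ‖x‖ := by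
    intro x i
    have h1 : |b.repr x i| ≤ ‖b.equivFun x‖ := by
      have := norm_le_pi_norm (b.equivFun x) i
      simpa [Real.norm_eq_abs, Module.Basis.equivFun_apply] using this
    refine h1.trans ?_
    have : b.equivFun x = eF x := by simp [heF]
    rw [this]
    exact eF.le_opNorm x
  set ψ : EuclideanSpace ℝ (Fin d) →L[ℝ] ℝ := LinearMap.toContinuousLinearMap φ with hψ
  set B : ℝ := ‖ψ‖ * C with hBdef
  have hB0 : 0 ≤ B := mul_nonneg (norm_nonneg _) hC.le
  set a : Fin d → ℝ := fun i => φ (b i) with ha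
  obtain ⟨j, hj⟩ : ∃ j, a j ≠ 0 := by
    by_contra h
    push_neg at h
    exact hφ (b.ext fun i => by simpa using h i)
  set Q : ℕ := ⌈2 * B / |a j|⌉₊ with hQdef
  set N : ℕ := ⌈K * (M + C)⌉₊ with hNdef
  refine ⟨(((2 * Q + 1) * (2 * N + 1) ^ (d - 1) : ℕ) : ℝ), ?_⟩
  intro k hk
  intro S
  have hk0 : (k : ℝ) ≠ 0 := Nat.cast_ne_zero.mpr hk.ne'
  have hk1 : (1 : ℝ) ≤ (k : ℝ) := by exact_mod_cast hk
  -- integer coordinates of points of S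
  have key : ∀ x ∈ S, ∀ i, ∃ m : ℤ, (m : ℝ) = b.repr ((k : ℝ) • x) i := by
    rintro x ⟨⟨y, hy, rfl⟩, -⟩ i
    rw [← Submodule.span_int_eq_addSubgroupClosure, Submodule.mem_toAddSubgroup] at hy
    have h2 : (k : ℝ) • (k : ℝ)⁻¹ • y = y := smul_inv_smul₀ hk0 y
    rw [h2]
    obtain ⟨m, hm⟩ := (b.mem_span_iff_repr_mem ℤ y).mp hy i
    exact ⟨m, hm⟩
  set F : EuclideanSpace ℝ (Fin d) → (Fin d → ℤ) := fun x i => ⌊b.repr ((k : ℝ) • x) i⌋ with hF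
  have hFx : ∀ x ∈ S, ∀ i, (F x i : ℝ) = b.repr ((k : ℝ) • x) i := by
    intro x hx i
    obtain ⟨m, hm⟩ := key x hx i
    show ((⌊(b.repr ((k : ℝ) • x)) i⌋ : ℤ) : ℝ) = _
    rw [← hm, Int.floor_intCast]
  have hinj : Set.InjOn F S := by
    intro x hx x' hx' h
    have h2 : ∀ i, b.repr ((k : ℝ) • x) i = b.repr ((k : ℝ) • x') i := fun i => by
      rw [← hFx x hx i, ← hFx x' hx' i, h]
    have h3 : (k : ℝ) • x = (k : ℝ) • x' := b.repr.injective (Finsupp.ext h2)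
    exact smul_right_injective (EuclideanSpace ℝ (Fin d)) hk0 h3
  -- norm bound
  have hnorm : ∀ x ∈ S, ‖x‖ ≤ M + C := by
    rintro x ⟨-, r, hr, hdist⟩
    have h1 : ‖r‖ ≤ M := by
      have := hM hr
      simpa [Metric.mem_closedBall] using this
    have h2 : C / k ≤ C := div_le_self hC.le hk1
    calc ‖x‖ = dist x 0 := (dist_zero_right x).symm
      _ ≤ dist x r + dist r 0 := dist_triangle x r 0
      _ = dist x r + ‖r‖ := by rw [dist_zero_right]
      _ ≤ C / k + M := add_le_add hdist h1
      _ ≤ M + C := by linarith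
  -- hyperplane bound
  have hφS : ∀ x ∈ S, |φ ((k : ℝ) • x) - k * c| ≤ B := by
    rintro x ⟨-, r, hr, hdist⟩
    have hrc : φ r = c := hR hr
    have h1 : |φ x - c| ≤ ‖ψ‖ * (C / k) := by
      have heq : φ x - c = ψ (x - r) := by
        simp [hψ, map_sub, hrc]
      rw [heq]
      calc |ψ (x - r)| ≤ ‖ψ‖ * ‖x - r‖ := by
            have := ψ.le_opNorm (x - r)
            simpa [Real.norm_eq_abs] using this
        _ ≤ ‖ψ‖ * (C / k) := by
            gcongr
            rw [← dist_eq_norm]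
            exact hdist
    have h2 : |φ ((k : ℝ) • x) - k * c| = k * |φ x - c| := by
      rw [map_smul, smul_eq_mul, ← mul_sub, abs_mul, abs_of_nonneg (by positivity : (0:ℝ) ≤ (k:ℝ))]
    rw [h2]
    calc (k : ℝ) * |φ x - c| ≤ k * (‖ψ‖ * (C / k)) := by gcongr
      _ = ‖ψ‖ * (k * (C / k)) := by ring
      _ = ‖ψ‖ * C := by rw [mul_div_cancel₀ _ hk0]
      _ = B := rfl
  set T' : Finset (Fin d → ℤ) :=
    (Fintype.piFinset fun _ : Fin d => Finset.Icc (-(k * N : ℤ)) (k * N)).filter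
      (fun n => |∑ i, (n i : ℝ) * a i - k * c| ≤ B) with hT'
  have hmaps : ∀ x ∈ S, F x ∈ T' := by
    intro x hx
    rw [hT', Finset.mem_filter, Fintype.mem_piFinset]
    constructor
    · intro i
      have h1 : |(F x i : ℝ)| ≤ (k : ℝ) * N := by
        rw [hFx x hx i]
        calc |b.repr ((k : ℝ) • x) i| ≤ K * ‖(k : ℝ) • x‖ := hK _ i
          _ = K * ((k : ℝ) * ‖x‖) := by
              rw [norm_smul, Real.norm_eq_abs, abs_of_nonneg (by positivity : (0:ℝ) ≤ (k:ℝ))]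
          _ ≤ K * ((k : ℝ) * (M + C)) := by
              refine mul_le_mul_of_nonneg_left ?_ hK0
              exact mul_le_mul_of_nonneg_left (hnorm x hx) (by positivity)
          _ = (k : ℝ) * (K * (M + C)) := by ring
          _ ≤ (k : ℝ) * N := by
              gcongr
              exact Nat.le_ceil _
      have h2 : |F x i| ≤ (k * N : ℤ) := by exact_mod_cast h1
      rw [Finset.mem_Icc]
      exact abs_le.mp h2
    · have hsum : ∑ i, (F x i : ℝ) * a i = φ ((k : ℝ) • x) := by
        conv_rhs => rw [← b.sum_repr ((k : ℝ) • x)]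
        rw [map_sum]
        refine Finset.sum_congr rfl fun i _ => ?_
        rw [hFx x hx i, φ.map_smul, smul_eq_mul]
      rw [hsum]
      exact hφS x hx
  have himg : F '' S ⊆ ↑T' := by
    rintro _ ⟨x, hx, rfl⟩
    exact hmaps x hx
  have hfin : S.Finite := Set.Finite.of_finite_image (T'.finite_toSet.subset himg) hinj
  refine ⟨hfin, ?_⟩
  -- fiber counting
  set res : (Fin d → ℤ) → ({i : Fin d // i ≠ j} → ℤ) := fun n i => n i.1 with hres
  set box : Finset ({i : Fin d // i ≠ j} → ℤ) :=
    Fintype.piFinset fun _ => Finset.Icc (-(k * N : ℤ)) (k * N) with hbox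
  have hcard2 : T'.card ≤ (2 * Q + 1) * box.card := by
    refine Finset.card_le_mul_card_image_of_maps_to (f := res) ?_ (2 * Q + 1) ?_
    · intro n hn
      rw [hbox, Fintype.mem_piFinset]
      intro i
      rw [hT', Finset.mem_filter, Fintype.mem_piFinset] at hn
      exact hn.1 i.1
    · intro m hm
      by_cases hne : (T'.filter fun n => res n = m).Nonempty
      · obtain ⟨n0, hn0⟩ := hne
        rw [Finset.mem_filter] at hn0
        have hbound : ∀ n ∈ (T'.filter fun n => res n = m),
            n j ∈ Finset.Icc (n0 j - Q) (n0 j + Q) := by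
          intro n hn
          rw [Finset.mem_filter] at hn
          have hoff : ∀ i, i ≠ j → n i = n0 i := by
            intro i hi
            have e1 : n i = m ⟨i, hi⟩ := congrFun hn.2 ⟨i, hi⟩
            have e2 : n0 i = m ⟨i, hi⟩ := congrFun hn0.2 ⟨i, hi⟩
            rw [e1, e2]
          have hdiff : ∑ i, (n i : ℝ) * a i - ∑ i, (n0 i : ℝ) * a i
              = ((n j : ℝ) - (n0 j : ℝ)) * a j := by
            rw [← Finset.sum_sub_distrib, Finset.sum_eq_single j]
            · ring
            · intro i _ hij
              rw [hoff i hij]; ring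
            · intro h; exact absurd (Finset.mem_univ j) h
          have hTn := (Finset.mem_filter.mp hn.1).2
          have hTn0 := (Finset.mem_filter.mp hn0.1).2
          have h2B : |((n j : ℝ) - n0 j) * a j| ≤ 2 * B := by
            rw [← hdiff]
            calc |∑ i, (n i : ℝ) * a i - ∑ i, (n0 i : ℝ) * a i|
                = |(∑ i, (n i : ℝ) * a i - k * c) - (∑ i, (n0 i : ℝ) * a i - k * c)| := by
                  ring_nf
              _ ≤ |∑ i, (n i : ℝ) * a i - k * c| + |∑ i, (n0 i : ℝ) * a i - k * c| :=
                  abs_sub _ _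
              _ ≤ B + B := add_le_add hTn hTn0
              _ = 2 * B := by ring
          have hQr : |(n j : ℝ) - n0 j| ≤ 2 * B / |a j| := by
            rw [le_div_iff₀ (abs_pos.mpr hj)]
            rw [abs_mul] at h2B
            exact h2B
          have hQz : |n j - n0 j| ≤ (Q : ℤ) := by
            have := hQr.trans (Nat.le_ceil _)
            exact_mod_cast this
          rw [Finset.mem_Icc]
          rw [abs_le] at hQz
          omega
        have hinj2 : Set.InjOn (fun n : Fin d → ℤ => n j) ↑(T'.filter fun n => res n = m) := by
          intro n hn n' hn' hjj
          simp only [Finset.coe_filter, Set.mem_setOf_eq] at hn hn'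
          funext i
          by_cases hij : i = j
          · subst hij; exact hjj
          · have e1 : n i = m ⟨i, hij⟩ := congrFun hn.2 ⟨i, hij⟩
            have e2 : n' i = m ⟨i, hij⟩ := congrFun hn'.2 ⟨i, hij⟩
            rw [e1, e2]
        calc (T'.filter fun n => res n = m).card
            ≤ (Finset.Icc (n0 j - Q) (n0 j + Q)).card :=
              Finset.card_le_card_of_injOn _ hbound hinj2
          _ = 2 * Q + 1 := by
              rw [Int.card_Icc]
              omega
      · rw [Finset.not_nonempty_iff_eq_empty] at hne
        simp [hne]
  have hboxcard : box.card = (2 * (k * N) + 1) ^ (d - 1) := by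
    rw [hbox, Fintype.card_piFinset, Finset.prod_const]
    congr 1
    · rw [Int.card_Icc]
      push_cast
      omega
    · rw [Finset.card_univ]
      have : Fintype.card {i : Fin d // i ≠ j} = d - 1 := by
        have := Fintype.card_subtype_compl (fun i : Fin d => i = j)
        simpa [Fintype.card_fin, Fintype.card_subtype_eq] using this
      exact this
  -- assemble
  have hchain : S.ncard ≤ (2 * Q + 1) * ((2 * N + 1) ^ (d - 1) * k ^ (d - 1)) := by
    have c1 : S.ncard ≤ T'.card := by
      calc S.ncard = (F '' S).ncard := (Set.ncard_image_of_injOn hinj).symm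
        _ ≤ (↑T' : Set (Fin d → ℤ)).ncard := Set.ncard_le_ncard himg T'.finite_toSet
        _ = T'.card := Set.ncard_coe_finset T'
    have c2 : (2 * (k * N) + 1) ^ (d - 1) ≤ ((2 * N + 1) * k) ^ (d - 1) := by
      apply Nat.pow_le_pow_left
      calc 2 * (k * N) + 1 ≤ 2 * N * k + k := by nlinarith
        _ = (2 * N + 1) * k := by ring
    calc S.ncard ≤ (2 * Q + 1) * box.card := c1.trans hcard2
      _ = (2 * Q + 1) * (2 * (k * N) + 1) ^ (d - 1) := by rw [hboxcard]
      _ ≤ (2 * Q + 1) * ((2 * N + 1) * k) ^ (d - 1) := Nat.mul_le_mul_left _ c2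
      _ = (2 * Q + 1) * ((2 * N + 1) ^ (d - 1) * k ^ (d - 1)) := by rw [mul_pow]
  calc (S.ncard : ℝ) ≤ (((2 * Q + 1) * ((2 * N + 1) ^ (d - 1) * k ^ (d - 1)) : ℕ) : ℝ) := by
        exact_mod_cast hchain
    _ = (((2 * Q + 1) * (2 * N + 1) ^ (d - 1) : ℕ) : ℝ) * (k : ℝ) ^ (d - 1) := by
        push_cast; ring
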